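/- For all real p > 0, r(p) < U_2(p) := ((1+2a)/(1+a)^4)^{1/8} where a = 1/p, i.e., r(p)^8 < p^3(p+2)/(p+1)^4. -/

import Mathlib

noncomputable def r (p : ℝ) : ℝ :=
  Real.Gamma ((p + 1) / 2) / (Real.sqrt (p / 2) * Real.Gamma (p / 2))

lemma r_pos {p : ℝ} (hp : 0 < p) : 0 < r p := by
  have h1 : 0 < Real.Gamma ((p + 1) / 2) := Real.Gamma_pos_of_pos (by linarith)
  have h2 : 0 < Real.Gamma (p / 2) := Real.Gamma_pos_of_pos (by linarith)
  have h3 : 0 < Real.sqrt (p / 2) := Real.sqrt_pos.mpr (by linarith)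
  exact div_pos h1 (mul_pos h3 h2)

lemma r_mul {p : ℝ} (hp : 0 < p) : r p * r (p + 1) = Real.sqrt (p / (p + 1)) := by
  have hx : (0:ℝ) < p / 2 := by linarith
  have hb := Real.Gamma_pos_of_pos hx
  have ha := Real.Gamma_pos_of_pos (show (0:ℝ) < (p + 1) / 2 by linarith)
  have hs1 : (0:ℝ) < Real.sqrt (p / 2) := Real.sqrt_pos.mpr hx
  have hs2 : (0:ℝ) < Real.sqrt ((p + 1) / 2) := Real.sqrt_pos.mpr (by linarith)
  have hc : Real.Gamma ((p + 1 + 1) / 2) = (p / 2) * Real.Gamma (p / 2) := by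
    rw [show (p + 1 + 1) / 2 = p / 2 + 1 by ring, Real.Gamma_add_one hx.ne']
  have hsplit : Real.sqrt (p / (p + 1)) = Real.sqrt (p / 2) / Real.sqrt ((p + 1) / 2) := by
    rw [← Real.sqrt_div hx.le]
    congr 1
    field_simp
  unfold r
  rw [hc, hsplit, div_mul_div_comm, div_eq_div_iff (by positivity) (by positivity)]
  have h2 : Real.sqrt (p / 2) * Real.sqrt (p / 2) = p / 2 := Real.mul_self_sqrt hx.le
  linear_combination (-(1:ℝ) * Real.Gamma ((p + 1) / 2) * Real.Gamma (p / 2) * Real.sqrt ((p + 1) / 2)) * h2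

lemma log_r_add {p : ℝ} (hp : 0 < p) :
    Real.log (r p) + Real.log (r (p + 1)) = (Real.log p - Real.log (p + 1)) / 2 := by
  have h1 := r_pos hp
  have h2 := r_pos (show (0:ℝ) < p + 1 by linarith)
  rw [← Real.log_mul h1.ne' h2.ne', r_mul hp, Real.log_sqrt (by positivity),
    Real.log_div hp.ne' (by positivity)]

lemma r_le_one {p : ℝ} (hp : 0 < p) : r p ≤ 1 := by
  have hx : (0:ℝ) < p / 2 := by linarith
  have hb := Real.Gamma_pos_of_pos hx
  have hA := Real.Gamma_pos_of_pos (show (0:ℝ) < (p + 1) / 2 by linarith)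
  have hs1 : (0:ℝ) < Real.sqrt (p / 2) := Real.sqrt_pos.mpr hx
  have h := Real.convexOn_log_Gamma.2 (Set.mem_Ioi.mpr hx)
    (Set.mem_Ioi.mpr (show (0:ℝ) < p / 2 + 1 by linarith))
    (by norm_num : (0:ℝ) ≤ 1/2) (by norm_num : (0:ℝ) ≤ 1/2) (by norm_num)
  simp only [Function.comp_apply, smul_eq_mul] at h
  rw [show (1/2 : ℝ) * (p/2) + (1/2 : ℝ) * (p/2 + 1) = (p + 1) / 2 by ring] at h
  rw [Real.Gamma_add_one hx.ne', Real.log_mul hx.ne' hb.ne'] at h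
  have hsq : Real.log (Real.sqrt (p/2) * Real.Gamma (p/2))
      = (1/2) * Real.log (p/2) + Real.log (Real.Gamma (p/2)) := by
    rw [Real.log_mul hs1.ne' hb.ne', Real.log_sqrt hx.le]
    ring
  have hle : Real.Gamma ((p + 1) / 2) ≤ Real.sqrt (p / 2) * Real.Gamma (p / 2) := by
    apply (Real.log_le_log_iff hA (mul_pos hs1 hb)).mp
    rw [hsq]; linarith
  unfold r
  rw [div_le_one (mul_pos hs1 hb)]
  exact hle

noncomputable def Fr (p : ℝ) : ℝ :=
  8 * Real.log (r p) - (3 * Real.log p + Real.log (p + 2) - 4 * Real.log (p + 1))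

lemma Fr_lt {p : ℝ} (hp : 0 < p) : Fr p < Fr (p + 2) := by
  have e1 := log_r_add hp
  have e2 := log_r_add (show (0:ℝ) < p + 1 by linarith)
  rw [show p + 1 + 1 = p + 2 by ring] at e2
  have key : Fr p - Fr (p + 2) =
      (Real.log p + 6 * Real.log (p + 2) + Real.log (p + 4))
        - (4 * Real.log (p + 1) + 4 * Real.log (p + 3)) := by
    unfold Fr
    rw [show p + 2 + 2 = p + 4 by ring, show p + 2 + 1 = p + 3 by ring]
    linarith
  have h1 : Real.log p + 6 * Real.log (p + 2) + Real.log (p + 4)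
      = Real.log (p * (p + 2) ^ 6 * (p + 4)) := by
    rw [Real.log_mul (by positivity) (by positivity),
      Real.log_mul (by positivity) (by positivity), Real.log_pow]
    push_cast; ring
  have h2 : 4 * Real.log (p + 1) + 4 * Real.log (p + 3)
      = Real.log ((p + 1) ^ 4 * (p + 3) ^ 4) := by
    rw [Real.log_mul (by positivity) (by positivity), Real.log_pow, Real.log_pow]
    push_cast; ring
  have hlt : Real.log (p * (p + 2) ^ 6 * (p + 4)) < Real.log ((p + 1) ^ 4 * (p + 3) ^ 4) := by
    apply Real.log_lt_log (by positivity)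
    nlinarith [sq_nonneg (p + 2), sq_nonneg ((p+2)^2 - 1), sq_nonneg p]
  linarith [key, h1 ▸ h2 ▸ hlt]

lemma Fr_le {p : ℝ} (hp : 0 < p) : Fr p ≤ 3 / p := by
  have h1 : Real.log (r p) ≤ 0 := Real.log_nonpos (r_pos hp).le (r_le_one hp)
  have h2 : Real.log (p + 1) - Real.log p ≤ 1 / p := by
    rw [← Real.log_div (by positivity) hp.ne']
    have h := Real.log_le_sub_one_of_pos (show 0 < (p + 1) / p by positivity)
    have : (p + 1) / p - 1 = 1 / p := by field_simp; ring
    linarith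
  have h3 : Real.log (p + 1) ≤ Real.log (p + 2) := by
    apply Real.log_le_log (by positivity); linarith
  unfold Fr
  have : 3 * (1/p) ≤ 3 / p := by rw [mul_one_div]
  linarith

lemma Fr_nonpos {p : ℝ} (hp : 0 < p) : Fr p ≤ 0 := by
  have hchain : ∀ n : ℕ, Fr p ≤ 3 / (p + 2 * n) := by
    intro n
    have hmono : Fr p ≤ Fr (p + 2 * n) := by
      induction n with
      | zero => simp
      | succ k ih =>
        have hk : (0:ℝ) < p + 2 * k := by positivity
        have hstep := (Fr_lt hk).le
        have harith : p + 2 * ((k : ℕ) + 1 : ℕ) = (p + 2 * k) + 2 := by push_cast; ring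
        rw [harith]
        linarith
    exact hmono.trans (Fr_le (by positivity))
  have hlim : Filter.Tendsto (fun n : ℕ => 3 / (p + 2 * n)) Filter.atTop (nhds 0) := by
    apply Filter.Tendsto.div_atTop tendsto_const_nhds
    apply Filter.tendsto_atTop_add_const_left
    exact (tendsto_natCast_atTop_atTop (R := ℝ)).const_mul_atTop (by norm_num)
  exact ge_of_tendsto' hlim hchain

theorem r_lt_U2 (p : ℝ) (hp : 0 < p) :
    r p < ((1 + 2 * (1 / p)) / (1 + 1 / p) ^ 4) ^ ((1 : ℝ) / 8) ∧
    r p ^ 8 < p ^ 3 * (p + 2) / (p + 1) ^ 4 := by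
  have hF : Fr p < 0 := lt_of_lt_of_le (Fr_lt hp) (Fr_nonpos (by linarith))
  have hrpos := r_pos hp
  have hXpos : 0 < p ^ 3 * (p + 2) / (p + 1) ^ 4 := by positivity
  have hB : 3 * Real.log p + Real.log (p + 2) - 4 * Real.log (p + 1)
      = Real.log (p ^ 3 * (p + 2) / (p + 1) ^ 4) := by
    rw [Real.log_div (by positivity) (by positivity),
      Real.log_mul (by positivity) (by positivity), Real.log_pow, Real.log_pow]
    push_cast; ring
  have h8 : r p ^ 8 < p ^ 3 * (p + 2) / (p + 1) ^ 4 := by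
    have hlog : Real.log (r p ^ 8) < Real.log (p ^ 3 * (p + 2) / (p + 1) ^ 4) := by
      rw [Real.log_pow, ← hB]
      unfold Fr at hF
      push_cast
      linarith
    exact (Real.log_lt_log_iff (by positivity) hXpos).mp hlog
  have hXeq : (1 + 2 * (1 / p)) / (1 + 1 / p) ^ 4 = p ^ 3 * (p + 2) / (p + 1) ^ 4 := by
    field_simp
  refine ⟨?_, h8⟩
  rw [hXeq]
  have hid : r p = (r p ^ 8) ^ ((1 : ℝ) / 8) := by
    rw [← Real.rpow_natCast (r p) 8, ← Real.rpow_mul hrpos.le]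
    norm_num
  rw [hid]
  exact Real.rpow_lt_rpow (by positivity) h8 (by norm_num)
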